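/- For a sequence ⟨x_n⟩ in a discrete semigroup (S,·), the set ⋂_{m=1}^∞ cl(FP(⟨x_n⟩_{n=m}^∞)) is a closed subsemigroup of the ultrafilter semigroup (βS,·); in particular it contains an idempotent ultrafilter, so every set containing FP(⟨x_n⟩_{n=1}^∞) is an IP set witnessed by a member of an idempotent ultrafilter. -/

import Mathlib

open Set

attribute [local instance] Ultrafilter.mul Ultrafilter.semigroup

/-- ⋂_m cl(FP(⟨x_n⟩_{n=m}^∞)) is a closed subsemigroup of (βS,·); in
particular it contains an idempotent ultrafilter, so every set containing FP(⟨x_n⟩) belongs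
to an idempotent ultrafilter (together with FP(⟨x_n⟩) itself). -/
theorem FP_closed_subsemigroup_idempotent {S : Type*} [Semigroup S] (x : Stream' S) :
    IsClosed (⋂ m : ℕ, {p : Ultrafilter S | Hindman.FP (x.drop m) ∈ p}) ∧
    (∀ p q : Ultrafilter S,
      p ∈ (⋂ m : ℕ, {p : Ultrafilter S | Hindman.FP (x.drop m) ∈ p}) →
      q ∈ (⋂ m : ℕ, {p : Ultrafilter S | Hindman.FP (x.drop m) ∈ p}) →
      p * q ∈ (⋂ m : ℕ, {p : Ultrafilter S | Hindman.FP (x.drop m) ∈ p})) ∧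
    (∃ p : Ultrafilter S, p * p = p ∧
      p ∈ (⋂ m : ℕ, {p : Ultrafilter S | Hindman.FP (x.drop m) ∈ p})) ∧
    (∀ A : Set S, Hindman.FP x ⊆ A →
      ∃ p : Ultrafilter S, p * p = p ∧ Hindman.FP x ∈ p ∧ A ∈ p) := by
  set T : Set (Ultrafilter S) := ⋂ m : ℕ, {p : Ultrafilter S | Hindman.FP (x.drop m) ∈ p} with hT
  have hclosed : IsClosed T :=
    isClosed_iInter fun i => ultrafilter_isClosed_basic _
  have hmul : ∀ p q : Ultrafilter S, p ∈ T → q ∈ T → p * q ∈ T := by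
    intro U V hU hV
    rw [hT, Set.mem_iInter] at *
    intro n
    have key : ∀ᶠ m in ↑(U * V), m ∈ Hindman.FP (x.drop n) := by
      rw [Ultrafilter.eventually_mul]
      filter_upwards [hU n] with m hm
      obtain ⟨n', hn⟩ := Hindman.FP.mul hm
      filter_upwards [hV (n' + n)] with m' hm'
      apply hn
      simpa only [Stream'.drop_drop, add_comm] using hm'
    exact key
  have hidem : ∃ p : Ultrafilter S, p * p = p ∧ p ∈ T := by
    have h := exists_idempotent_in_compact_subsemigroup
      Ultrafilter.continuous_mul_left T ?_ (hclosed.isCompact) (fun p hp q hq => hmul p q hp hq)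
    · rcases h with ⟨U, hU, hU2⟩
      exact ⟨U, hU2, hU⟩
    · apply IsCompact.nonempty_iInter_of_sequence_nonempty_isCompact_isClosed
      · intro n U hU
        have : Hindman.FP (x.drop (n + 1)) ⊆ Hindman.FP (x.drop n) := by
          rw [← Stream'.drop_drop, ← Stream'.tail_eq_drop]
          exact fun m hm => Hindman.FP.tail _ _ hm
        exact Filter.mem_of_superset hU this
      · intro n
        exact ⟨pure _, Filter.mem_pure.mpr <| Hindman.FP.head _⟩
      · exact (ultrafilter_isClosed_basic _).isCompact
      · intro n
        apply ultrafilter_isClosed_basic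
  refine ⟨hclosed, hmul, hidem, ?_⟩
  intro A hA
  obtain ⟨p, hpp, hp⟩ := hidem
  have hFP : Hindman.FP x ∈ p := by
    have := Set.mem_iInter.mp hp 0
    simpa using this
  exact ⟨p, hpp, hFP, Filter.mem_of_superset hFP hA⟩
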